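/- Suppose S(z) = D + C (I - Z(z)A)^{-1} Z(z) B where Z(z) : X^d → X is the row operator with entries z_j I_X and where the colligation U = [[A, B],[C, D]] : X ⊕ U → X^d ⊕ Y is coisometric (U U* = I). Then for all z, ζ in the open unit ball B^d of ℂ^d: I_Y - S(z) S(ζ)* = (1 - ⟨z, ζ⟩) · C (I - Z(z)A)^{-1} (I - A* Z(ζ)*)^{-1} C*, where ⟨z, ζ⟩ = Σ_j z_j conj(ζ_j). -/

import Mathlib

open scoped ENNReal
set_option synthInstance.maxHeartbeats 400000
set_option maxHeartbeats 1000000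

instance PiLp.instCompleteSpace' {p : ℝ≥0∞} {ι : Type*} {β : ι → Type*}
    [∀ i, UniformSpace (β i)] [∀ i, CompleteSpace (β i)] : CompleteSpace (PiLp p β) :=
  (PiLp.uniformEquiv p β).completeSpace_iff.2 (Pi.complete β)

/-- The row operator `Z(z) = [z₁ I_X, …, z_d I_X] : X^d → X`. -/
noncomputable def rowOp {X : Type*} [NormedAddCommGroup X] [NormedSpace ℂ X]
    {d : ℕ} (z : EuclideanSpace ℂ (Fin d)) : PiLp 2 (fun _ : Fin d => X) →L[ℂ] X :=
  ∑ j : Fin d, z j • ((ContinuousLinearMap.proj j : (∀ _ : Fin d, X) →L[ℂ] X).comp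
      (PiLp.continuousLinearEquiv 2 ℂ (fun _ : Fin d => X)).toContinuousLinearMap)

section Aux

set_option linter.unusedSectionVars false

open ContinuousLinearMap

variable {X : Type*} [NormedAddCommGroup X] [InnerProductSpace ℂ X] [CompleteSpace X] {d : ℕ}

lemma rowOp_apply (z : EuclideanSpace ℂ (Fin d)) (x : PiLp 2 (fun _ : Fin d => X)) :
    rowOp z x = ∑ j, z j • x j := by
  simp [rowOp, ContinuousLinearMap.sum_apply]

lemma rowOp_norm_le (z : EuclideanSpace ℂ (Fin d)) : ‖rowOp (X := X) z‖ ≤ ‖z‖ := by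
  have key : ∀ x : PiLp 2 (fun _ : Fin d => X), ‖rowOp z x‖ ≤ ‖z‖ * ‖x‖ := by
    intro x
    rw [rowOp_apply]
    have step1 : ‖∑ j, z j • x j‖ ≤ ∑ j, ‖z j‖ * ‖x j‖ := by
      refine (norm_sum_le _ _).trans ?_
      simp [norm_smul]
    refine step1.trans ?_
    set a : EuclideanSpace ℝ (Fin d) := (WithLp.equiv 2 (Fin d → ℝ)).symm fun j => ‖z j‖ with ha
    set b : EuclideanSpace ℝ (Fin d) := (WithLp.equiv 2 (Fin d → ℝ)).symm fun j => ‖x j‖ with hb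
    have h := real_inner_le_norm a b
    have hab : (inner ℝ a b : ℝ) = ∑ j, ‖z j‖ * ‖x j‖ := by
      rw [PiLp.inner_apply]
      simp [ha, hb, mul_comm]
    have h1 : ‖a‖ = ‖z‖ := by
      rw [EuclideanSpace.norm_eq, EuclideanSpace.norm_eq]
      simp [ha]
    have h2 : ‖b‖ = ‖x‖ := by
      rw [EuclideanSpace.norm_eq, PiLp.norm_eq_of_L2]
      simp [hb]
    rw [hab, h1, h2] at h
    exact h
  exact ContinuousLinearMap.opNorm_le_bound _ (norm_nonneg z) key

noncomputable def colOp (ζ : EuclideanSpace ℂ (Fin d)) : X →L[ℂ] PiLp 2 (fun _ : Fin d => X) :=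
  ((PiLp.continuousLinearEquiv 2 ℂ (fun _ : Fin d => X)).symm.toContinuousLinearMap).comp
    (ContinuousLinearMap.pi fun j => ((starRingEnd ℂ) (ζ j)) • ContinuousLinearMap.id ℂ X)

lemma colOp_apply (ζ : EuclideanSpace ℂ (Fin d)) (x : X) (j : Fin d) :
    colOp ζ x j = (starRingEnd ℂ) (ζ j) • x := rfl

lemma adjoint_rowOp (ζ : EuclideanSpace ℂ (Fin d)) :
    ContinuousLinearMap.adjoint (rowOp (X := X) ζ) = colOp ζ := by
  symm
  rw [ContinuousLinearMap.eq_adjoint_iff]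
  intro x y
  rw [PiLp.inner_apply, rowOp_apply, inner_sum]
  refine Finset.sum_congr rfl fun j _ => ?_
  rw [colOp_apply, inner_smul_left, inner_smul_right]
  simp

lemma rowOp_comp_adjoint (z ζ : EuclideanSpace ℂ (Fin d)) :
    (rowOp (X := X) z).comp (ContinuousLinearMap.adjoint (rowOp (X := X) ζ))
      = (∑ j, z j * (starRingEnd ℂ) (ζ j)) • (1 : X →L[ℂ] X) := by
  rw [adjoint_rowOp]
  ext x
  simp only [ContinuousLinearMap.comp_apply, rowOp_apply, colOp_apply,
    ContinuousLinearMap.smul_apply, ContinuousLinearMap.one_apply, Finset.sum_smul, smul_smul,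
    ContinuousLinearMap.sum_apply]

lemma norm_le_one_of_coisom {E F P : Type*}
    [NormedAddCommGroup E] [InnerProductSpace ℂ E] [CompleteSpace E]
    [NormedAddCommGroup F] [InnerProductSpace ℂ F] [CompleteSpace F]
    [NormedAddCommGroup P] [InnerProductSpace ℂ P] [CompleteSpace P]
    (A : E →L[ℂ] P) (B : F →L[ℂ] P)
    (h : A.comp (ContinuousLinearMap.adjoint A) + B.comp (ContinuousLinearMap.adjoint B) = 1) :
    ‖A‖ ≤ 1 := by
  rw [← ContinuousLinearMap.adjoint.norm_map A]
  refine ContinuousLinearMap.opNorm_le_bound _ zero_le_one fun y => ?_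
  rw [one_mul]
  have h1 := congrArg (fun T : P →L[ℂ] P => RCLike.re (inner ℂ (T y) y : ℂ)) h
  simp only [ContinuousLinearMap.add_apply, ContinuousLinearMap.comp_apply,
    ContinuousLinearMap.one_apply, inner_add_left, map_add] at h1
  have e1 : RCLike.re (inner ℂ (A ((ContinuousLinearMap.adjoint A) y)) y : ℂ)
      = ‖(ContinuousLinearMap.adjoint A) y‖ ^ 2 := by
    rw [← inner_conj_symm, ← ContinuousLinearMap.adjoint_inner_left]
    simp [inner_self_eq_norm_sq]
    norm_cast
  have e2 : RCLike.re (inner ℂ (B ((ContinuousLinearMap.adjoint B) y)) y : ℂ)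
      = ‖(ContinuousLinearMap.adjoint B) y‖ ^ 2 := by
    rw [← inner_conj_symm, ← ContinuousLinearMap.adjoint_inner_left]
    simp [inner_self_eq_norm_sq]
    norm_cast
  rw [e1, e2, inner_self_eq_norm_sq] at h1
  nlinarith [norm_nonneg ((ContinuousLinearMap.adjoint A) y), norm_nonneg y,
    sq_nonneg ‖(ContinuousLinearMap.adjoint B) y‖]

end Aux

/-- for a coisometric colligation `U = [[A,B],[C,D]]` (i.e. `UU* = I`,
expressed componentwise) and `S(z) = D + C(I - Z(z)A)⁻¹Z(z)B`, one has
`I - S(z)S(ζ)* = (1 - ⟨z,ζ⟩) C (I - Z(z)A)⁻¹ (I - A*Z(ζ)*)⁻¹ C*` on the ball. -/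
theorem coisometric_realization_kernel_identity
    {X G Y : Type*}
    [NormedAddCommGroup X] [InnerProductSpace ℂ X] [CompleteSpace X]
    [NormedAddCommGroup G] [InnerProductSpace ℂ G] [CompleteSpace G]
    [NormedAddCommGroup Y] [InnerProductSpace ℂ Y] [CompleteSpace Y]
    {d : ℕ} (hd : 1 ≤ d)
    (A : X →L[ℂ] PiLp 2 (fun _ : Fin d => X))
    (B : G →L[ℂ] PiLp 2 (fun _ : Fin d => X))
    (C : X →L[ℂ] Y) (D : G →L[ℂ] Y)
    (hco1 : A.comp (ContinuousLinearMap.adjoint A)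
        + B.comp (ContinuousLinearMap.adjoint B) = 1)
    (hco2 : A.comp (ContinuousLinearMap.adjoint C)
        + B.comp (ContinuousLinearMap.adjoint D) = 0)
    (hco3 : C.comp (ContinuousLinearMap.adjoint A)
        + D.comp (ContinuousLinearMap.adjoint B) = 0)
    (hco4 : C.comp (ContinuousLinearMap.adjoint C)
        + D.comp (ContinuousLinearMap.adjoint D) = 1)
    (S : EuclideanSpace ℂ (Fin d) → G →L[ℂ] Y)
    (hS : ∀ z : EuclideanSpace ℂ (Fin d),
      S z = D + ((C.comp (Ring.inverse (1 - (rowOp z).comp A))).comp (rowOp z)).comp B) :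
    ∀ z ζ : EuclideanSpace ℂ (Fin d), ‖z‖ < 1 → ‖ζ‖ < 1 →
      (1 : Y →L[ℂ] Y) - (S z).comp (ContinuousLinearMap.adjoint (S ζ))
      = (1 - ∑ j, z j * (starRingEnd ℂ) (ζ j)) •
          ((C.comp (Ring.inverse (1 - (rowOp z).comp A))).comp
            ((Ring.inverse ((1 : X →L[ℂ] X) - (ContinuousLinearMap.adjoint A).comp
              (ContinuousLinearMap.adjoint (rowOp ζ)))).comp
              (ContinuousLinearMap.adjoint C))) := by
  have hAnorm : ‖A‖ ≤ 1 := norm_le_one_of_coisom A B hco1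
  intro z ζ hz hζ
  set Z : PiLp 2 (fun _ : Fin d => X) →L[ℂ] X := rowOp z with hZdef
  set W : PiLp 2 (fun _ : Fin d => X) →L[ℂ] X := rowOp ζ with hWdef
  have hZA : ‖Z.comp A‖ < 1 := by
    calc ‖Z.comp A‖ ≤ ‖Z‖ * ‖A‖ := ContinuousLinearMap.opNorm_comp_le _ _
      _ ≤ ‖z‖ * 1 := mul_le_mul (rowOp_norm_le z) hAnorm (norm_nonneg A)
          (norm_nonneg z)
      _ < 1 := by rwa [mul_one]
  have hWA : ‖W.comp A‖ < 1 := by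
    calc ‖W.comp A‖ ≤ ‖W‖ * ‖A‖ := ContinuousLinearMap.opNorm_comp_le _ _
      _ ≤ ‖ζ‖ * 1 := mul_le_mul (rowOp_norm_le ζ) hAnorm (norm_nonneg A)
          (norm_nonneg ζ)
      _ < 1 := by rwa [mul_one]
  set uz : (X →L[ℂ] X)ˣ := Units.oneSub (Z.comp A) hZA with huz
  set uw : (X →L[ℂ] X)ˣ := Units.oneSub (W.comp A) hWA with huw
  set E : X →L[ℂ] X := ↑uz⁻¹ with hEdef
  set Ew : X →L[ℂ] X := ↑uw⁻¹ with hEwdef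
  set F : X →L[ℂ] X := ContinuousLinearMap.adjoint Ew with hFdef
  have hEz : Ring.inverse (1 - Z.comp A) = E := NormedRing.inverse_one_sub _ hZA
  have hEw : Ring.inverse (1 - W.comp A) = Ew := NormedRing.inverse_one_sub _ hWA
  have huwval : (↑uw : X →L[ℂ] X) = 1 - W.comp A := rfl
  have huzval : (↑uz : X →L[ℂ] X) = 1 - Z.comp A := rfl
  have hadj_uw : (1 : X →L[ℂ] X) - (ContinuousLinearMap.adjoint A).comp
      (ContinuousLinearMap.adjoint W) = ContinuousLinearMap.adjoint (↑uw : X →L[ℂ] X) := by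
    rw [huwval, map_sub, ContinuousLinearMap.adjoint_comp]
    congr 1
    rw [ContinuousLinearMap.one_def, ContinuousLinearMap.adjoint_id]
  have v1 : (ContinuousLinearMap.adjoint (↑uw : X →L[ℂ] X)) * F = 1 := by
    rw [hFdef, ContinuousLinearMap.mul_def, ← ContinuousLinearMap.adjoint_comp,
      ← ContinuousLinearMap.mul_def, Units.inv_mul, ContinuousLinearMap.one_def,
      ContinuousLinearMap.adjoint_id]
  have v2 : F * (ContinuousLinearMap.adjoint (↑uw : X →L[ℂ] X)) = 1 := by
    rw [hFdef, ContinuousLinearMap.mul_def, ← ContinuousLinearMap.adjoint_comp,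
      ← ContinuousLinearMap.mul_def, Units.mul_inv, ContinuousLinearMap.one_def,
      ContinuousLinearMap.adjoint_id]
  have hFinv : Ring.inverse ((1 : X →L[ℂ] X) - (ContinuousLinearMap.adjoint A).comp
      (ContinuousLinearMap.adjoint W)) = F := by
    rw [hadj_uw]
    exact Ring.inverse_unit ⟨ContinuousLinearMap.adjoint (↑uw : X →L[ℂ] X), F, v1, v2⟩
  -- pointwise relations
  set s : ℂ := ∑ j, z j * (starRingEnd ℂ) (ζ j) with hsdef
  have hE1 : ∀ x : X, E x = x + E (Z (A x)) := by
    intro x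
    have h := uz.inv_mul
    rw [huzval, mul_sub, mul_one] at h
    have h2 := congrArg (fun T : X →L[ℂ] X => T x) h
    simp only [ContinuousLinearMap.sub_apply, ContinuousLinearMap.mul_apply,
      ContinuousLinearMap.comp_apply, ContinuousLinearMap.one_apply] at h2
    rw [← hEdef] at h2
    linear_combination (norm := module) h2
  have hF1 : ∀ x : X, F x = x + (ContinuousLinearMap.adjoint A)
      ((ContinuousLinearMap.adjoint W) (F x)) := by
    intro x
    have h := v1
    rw [← hadj_uw, sub_mul, one_mul] at h
    have h2 := congrArg (fun T : X →L[ℂ] X => T x) h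
    simp only [ContinuousLinearMap.sub_apply, ContinuousLinearMap.mul_apply,
      ContinuousLinearMap.comp_apply, ContinuousLinearMap.one_apply] at h2
    linear_combination (norm := module) h2
  have hZW : ∀ x : X, Z ((ContinuousLinearMap.adjoint W) x) = s • x := by
    intro x
    have h := congrArg (fun T : X →L[ℂ] X => T x) (rowOp_comp_adjoint z ζ)
    simpa only [ContinuousLinearMap.comp_apply, ContinuousLinearMap.smul_apply,
      ContinuousLinearMap.one_apply] using h
  have p4 : ∀ g : Y, C ((ContinuousLinearMap.adjoint C) g)
      + D ((ContinuousLinearMap.adjoint D) g) = g := by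
    intro g
    have h := congrArg (fun T : Y →L[ℂ] Y => T g) hco4
    simpa only [ContinuousLinearMap.add_apply, ContinuousLinearMap.comp_apply,
      ContinuousLinearMap.one_apply] using h
  have p3 : ∀ u, D ((ContinuousLinearMap.adjoint B) u)
      = -(C ((ContinuousLinearMap.adjoint A) u)) := by
    intro u
    have h := congrArg (fun T => T u) hco3
    simp only [ContinuousLinearMap.add_apply, ContinuousLinearMap.comp_apply,
      ContinuousLinearMap.zero_apply] at h
    exact eq_neg_of_add_eq_zero_right h
  have p2 : ∀ g, B ((ContinuousLinearMap.adjoint D) g)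
      = -(A ((ContinuousLinearMap.adjoint C) g)) := by
    intro g
    have h := congrArg (fun T => T g) hco2
    simp only [ContinuousLinearMap.add_apply, ContinuousLinearMap.comp_apply,
      ContinuousLinearMap.zero_apply] at h
    exact eq_neg_of_add_eq_zero_right h
  have p1 : ∀ u, B ((ContinuousLinearMap.adjoint B) u)
      = u - A ((ContinuousLinearMap.adjoint A) u) := by
    intro u
    have h := congrArg (fun T => T u) hco1
    simp only [ContinuousLinearMap.add_apply, ContinuousLinearMap.comp_apply,
      ContinuousLinearMap.one_apply] at h
    exact eq_sub_of_add_eq' h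
  -- rewrite the goal
  rw [hS z, hS ζ]
  rw [← hZdef, ← hWdef]
  rw [hEz, hEw, hFinv]
  have hadjS : ContinuousLinearMap.adjoint (D + ((C.comp Ew).comp W).comp B)
      = ContinuousLinearMap.adjoint D + (ContinuousLinearMap.adjoint B).comp
        ((ContinuousLinearMap.adjoint W).comp (F.comp (ContinuousLinearMap.adjoint C))) := by
    rw [map_add]
    simp only [ContinuousLinearMap.adjoint_comp, hFdef]
  rw [hadjS]
  ext g
  simp only [ContinuousLinearMap.sub_apply, ContinuousLinearMap.one_apply,
    ContinuousLinearMap.comp_apply, ContinuousLinearMap.add_apply,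
    ContinuousLinearMap.smul_apply, ContinuousLinearMap.coe_smul', Pi.smul_apply, map_add]
  set y : X := (ContinuousLinearMap.adjoint C) g with hy
  set v : X := F y with hv0
  set u : PiLp 2 (fun _ : Fin d => X) := (ContinuousLinearMap.adjoint W) v with hu0
  rw [p3 u, p2 g, p1 u]
  have hg : D ((ContinuousLinearMap.adjoint D) g) = g - C y := by
    rw [hy]
    exact eq_sub_of_add_eq' (p4 g)
  rw [hg]
  have hAu : (ContinuousLinearMap.adjoint A) u = v - y := by
    rw [hu0, hv0]
    have h := hF1 y
    rw [← hv0, ← hu0] at h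
    rw [← hv0, ← hu0]
    linear_combination (norm := module) (-1 : ℂ) • h
  rw [hAu]
  have hZu : Z u = s • v := by rw [hu0]; exact hZW v
  have hEv := hE1 v
  simp only [map_sub, map_neg, ← hy]
  rw [hZu]
  simp only [map_sub, map_add, map_neg, map_smul]
  rw [hEv]
  simp only [map_add]
  module
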